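/- Let f satisfy the Hecke relation f(m)f(n) = ∑_{d|gcd(m,n)} f(mn/d²), f(1)=1, let a be its Dirichlet inverse, and let F : ℕ → ℝ be any function. Then for every n ≥ 1, ∑_{abc² = n} f(a) f(b) μ(b) μ(bc)² F(bc) = f(n) ∑_{αβ = n} μ(β) F(β). -/

import Mathlib

open Finset ArithmeticFunction
open scoped ArithmeticFunction.Moebius

private lemma heckeP (f : ℕ → ℝ)
    (hecke : ∀ m n : ℕ, 0 < m → 0 < n →
      f m * f n = ∑ d ∈ (Nat.gcd m n).divisors, f (m * n / d ^ 2))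
    {p : ℕ} (hp : p.Prime) {k : ℕ} (hk : 0 < k) :
    f p * f k = f (p * k) + if p ∣ k then f (k / p) else 0 := by
  rw [hecke p k hp.pos hk]
  by_cases h : p ∣ k
  · rw [Nat.gcd_eq_left h, hp.divisors, if_pos h]
    rw [Finset.sum_insert (by simp [Ne.symm hp.ne_one]), Finset.sum_singleton]
    congr 2
    · simp
    · rw [pow_two]
      exact Nat.mul_div_mul_left k p hp.pos
  · have hcop : Nat.gcd p k = 1 := (hp.coprime_iff_not_dvd).2 h
    rw [hcop, Nat.divisors_one, Finset.sum_singleton, if_neg h]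
    simp

private lemma heckeMul (f : ℕ → ℝ)
    (hecke : ∀ m n : ℕ, 0 < m → 0 < n →
      f m * f n = ∑ d ∈ (Nat.gcd m n).divisors, f (m * n / d ^ 2))
    {p : ℕ} (hp : p.Prime) {k : ℕ} (hk : 0 < k) (h : ¬ p ∣ k) :
    f (p * k) = f p * f k := by
  rw [heckeP f hecke hp hk, if_neg h, add_zero]

private lemma sum_divisors_primeMul {p g : ℕ} (hp : p.Prime) (hpg : ¬ p ∣ g) (hg : g ≠ 0)
    (h : ℕ → ℝ) :
    ∑ c ∈ (p * g).divisors, h c = ∑ c ∈ g.divisors, (h c + h (p * c)) := by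
  have hinj : Function.Injective (fun d : ℕ => p * d) := fun a b hab => by
    exact Nat.eq_of_mul_eq_mul_left hp.pos hab
  have hset : (p * g).divisors = g.divisors ∪ g.divisors.map ⟨fun d => p * d, hinj⟩ := by
    ext c
    simp only [Nat.mem_divisors, Finset.mem_union, Finset.mem_map,
      Function.Embedding.coeFn_mk]
    constructor
    · rintro ⟨hc, -⟩
      by_cases hpc : p ∣ c
      · obtain ⟨d, rfl⟩ := hpc
        exact Or.inr ⟨d, ⟨(mul_dvd_mul_iff_left (a := p) hp.pos.ne').mp hc, hg⟩, rfl⟩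
      · exact Or.inl ⟨(Nat.Coprime.dvd_of_dvd_mul_left
          ((Nat.coprime_comm.mp ((hp.coprime_iff_not_dvd).2 hpc))) hc), hg⟩
    · rintro (⟨hc, -⟩ | ⟨d, ⟨hd, -⟩, rfl⟩)
      · exact ⟨hc.mul_left p, mul_ne_zero hp.pos.ne' hg⟩
      · exact ⟨mul_dvd_mul_left p hd, mul_ne_zero hp.pos.ne' hg⟩
  have hdisj : Disjoint g.divisors (g.divisors.map ⟨fun d => p * d, hinj⟩) := by
    rw [Finset.disjoint_left]
    rintro c hc hc'
    simp only [Finset.mem_map, Function.Embedding.coeFn_mk] at hc'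
    obtain ⟨d, -, rfl⟩ := hc'
    exact hpg ((dvd_mul_right p d).trans (Nat.mem_divisors.mp hc).1)
  rw [hset, Finset.sum_union hdisj, Finset.sum_map, Finset.sum_add_distrib]
  simp

private lemma keyL (f : ℕ → ℝ) (hf1 : f 1 = 1)
    (hecke : ∀ m n : ℕ, 0 < m → 0 < n →
      f m * f n = ∑ d ∈ (Nat.gcd m n).divisors, f (m * n / d ^ 2)) :
    ∀ m : ℕ, Squarefree m → ∀ k : ℕ, 0 < k →
      ∑ c ∈ (Nat.gcd m k).divisors, (μ (m / c) : ℝ) * f (m / c) * f (k / c)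
        = (μ m : ℝ) * f (m * k) := by
  intro m
  induction m using Nat.strong_induction_on with
  | _ m ih =>
  intro hsq k hk
  rcases eq_or_ne m 1 with rfl | hm1
  · simp [hf1, Nat.gcd_one_left]
  have hm0 : m ≠ 0 := hsq.ne_zero
  set p := m.minFac with hpdef
  have hp : p.Prime := Nat.minFac_prime hm1
  obtain ⟨m', hmm'⟩ : p ∣ m := Nat.minFac_dvd m
  have hm'0 : m' ≠ 0 := by rintro rfl; simp at hmm'; exact hm0 hmm'
  have hm'pos : 0 < m' := Nat.pos_of_ne_zero hm'0
  have hsq' : Squarefree m' := hsq.squarefree_of_dvd ⟨p, by rw [hmm']; ring⟩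
  have hpm' : ¬ p ∣ m' := by
    intro hdvd
    have : p * p ∣ m := by rw [hmm']; exact mul_dvd_mul_left p hdvd
    exact hp.not_isUnit (hsq p this)
  have hm'lt : m' < m := by
    rw [hmm']
    exact (Nat.lt_mul_iff_one_lt_left hm'pos).2 hp.one_lt
  have copPm' : Nat.Coprime p m' := (hp.coprime_iff_not_dvd).2 hpm'
  -- Step B : the IH sum
  have hgcdIH : Nat.gcd m' (p * k) = Nat.gcd m' k :=
    Nat.Coprime.gcd_mul_left_cancel_right k copPm'
  have hIH := ih m' hm'lt hsq' (p * k) (Nat.mul_pos hp.pos hk)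
  rw [hgcdIH] at hIH
  -- Step A : the main sum equals minus the IH sum
  have hS : ∑ c ∈ (Nat.gcd m k).divisors, (μ (m / c) : ℝ) * f (m / c) * f (k / c)
      = -∑ c ∈ (Nat.gcd m' k).divisors,
          (μ (m' / c) : ℝ) * f (m' / c) * f (p * k / c) := by
    rw [← Finset.sum_neg_distrib]
    by_cases hpk : p ∣ k
    · obtain ⟨k₂, rfl⟩ := hpk
      have hk₂pos : 0 < k₂ := Nat.pos_of_ne_zero (fun h => by subst h; simp at hk)
      have hgcd2 : Nat.gcd m' (p * k₂) = Nat.gcd m' k₂ :=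
        Nat.Coprime.gcd_mul_left_cancel_right k₂ copPm'
      have hgcd : Nat.gcd m (p * k₂) = p * Nat.gcd m' (p * k₂) := by
        rw [hmm', Nat.gcd_mul_left, hgcd2]
      set g := Nat.gcd m' (p * k₂) with hgdef
      have hpg : ¬ p ∣ g := fun h => hpm' (h.trans (Nat.gcd_dvd_left _ _))
      have hg0 : g ≠ 0 := fun h => hm'0 (Nat.eq_zero_of_gcd_eq_zero_left h)
      rw [hgcd, sum_divisors_primeMul hp hpg hg0]
      apply Finset.sum_congr rfl
      intro c hc
      obtain ⟨hcg, -⟩ := Nat.mem_divisors.mp hc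
      have hcm' : c ∣ m' := hcg.trans (Nat.gcd_dvd_left _ _)
      have hck : c ∣ p * k₂ := hcg.trans (Nat.gcd_dvd_right _ _)
      have hc0 : 0 < c := Nat.pos_of_ne_zero (fun h => by subst h; exact hg0 (Nat.eq_zero_of_zero_dvd hcg))
      have hpc : ¬ p ∣ c := fun h => hpg (h.trans hcg)
      have hck₂ : c ∣ k₂ :=
        (Nat.Coprime.dvd_of_dvd_mul_left
          (Nat.coprime_comm.mp ((hp.coprime_iff_not_dvd).2 hpc)) hck)
      have hm'c : m' / c ∣ m' := Nat.div_dvd_of_dvd hcm'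
      have hpm'c : ¬ p ∣ m' / c := fun h => hpm' (h.trans hm'c)
      have hm'cpos : 0 < m' / c := Nat.div_pos (Nat.le_of_dvd hm'pos hcm') hc0
      have hkcpos : 0 < p * k₂ / c := Nat.div_pos (Nat.le_of_dvd (Nat.mul_pos hp.pos hk₂pos) hck) hc0
      -- rewrite m / c and m / (p * c)
      have e1 : m / c = p * (m' / c) := by rw [hmm', Nat.mul_div_assoc p hcm']
      have e2 : m / (p * c) = m' / c := by
        rw [hmm', Nat.mul_div_mul_left m' c hp.pos]
      have e3 : p * k₂ / (p * c) = k₂ / c := Nat.mul_div_mul_left k₂ c hp.pos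
      -- key : p divides (p*k₂)/c
      have e4 : p * k₂ / c = p * (k₂ / c) := Nat.mul_div_assoc p hck₂
      have e5 : (p * k₂ / c) / p = k₂ / c := by rw [e4, Nat.mul_div_cancel_left _ hp.pos]
      have hpdvd : p ∣ p * k₂ / c := by rw [e4]; exact dvd_mul_right p _
      have hXpos : 0 < p * k₂ / c := hkcpos
      have hkey := heckeP f hecke hp hXpos
      rw [if_pos hpdvd, e5] at hkey
      -- hkey : f p * f (p*k₂/c) = f (p * (p*k₂/c)) + f (k₂/c)
      have emu : (μ (m / c) : ℤ) = μ p * μ (m' / c) := by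
        rw [e1, isMultiplicative_moebius.map_mul_of_coprime
          ((hp.coprime_iff_not_dvd).2 hpm'c)]
      have ef : f (m / c) = f p * f (m' / c) := by
        rw [e1, heckeMul f hecke hp hm'cpos hpm'c]
      have efd : f (p * (p * k₂) / c) = f (p * (p * k₂ / c)) := by
        rw [Nat.mul_div_assoc p hck]
      rw [e2, e3, emu, ef, efd, moebius_apply_prime hp]
      push_cast
      linear_combination (-((μ (m' / c) : ℤ) : ℝ) * f (m' / c)) * hkey
    · have hgcd : Nat.gcd m k = Nat.gcd m' k := by
        rw [hmm']
        exact Nat.Coprime.gcd_mul_left_cancel m' ((hp.coprime_iff_not_dvd).2 hpk)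
      rw [hgcd]
      apply Finset.sum_congr rfl
      intro c hc
      obtain ⟨hcg, -⟩ := Nat.mem_divisors.mp hc
      have hcm' : c ∣ m' := hcg.trans (Nat.gcd_dvd_left _ _)
      have hck : c ∣ k := hcg.trans (Nat.gcd_dvd_right _ _)
      have hc0 : 0 < c := Nat.pos_of_ne_zero
        (fun h => by subst h; exact hm'0 (Nat.eq_zero_of_zero_dvd hcm'))
      have hm'c : m' / c ∣ m' := Nat.div_dvd_of_dvd hcm'
      have hkc : k / c ∣ k := Nat.div_dvd_of_dvd hck
      have hpm'c : ¬ p ∣ m' / c := fun h => hpm' (h.trans hm'c)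
      have hpkc : ¬ p ∣ k / c := fun h => hpk (h.trans hkc)
      have hm'cpos : 0 < m' / c := Nat.div_pos (Nat.le_of_dvd hm'pos hcm') hc0
      have hkcpos : 0 < k / c := Nat.div_pos (Nat.le_of_dvd hk hck) hc0
      have e1 : m / c = p * (m' / c) := by rw [hmm', Nat.mul_div_assoc p hcm']
      have emu : (μ (m / c) : ℤ) = μ p * μ (m' / c) := by
        rw [e1, isMultiplicative_moebius.map_mul_of_coprime
          ((hp.coprime_iff_not_dvd).2 hpm'c)]
      have ef : f (m / c) = f p * f (m' / c) := by
        rw [e1, heckeMul f hecke hp hm'cpos hpm'c]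
      have ekc : f (p * k / c) = f p * f (k / c) := by
        rw [Nat.mul_div_assoc p hck, heckeMul f hecke hp hkcpos hpkc]
      rw [emu, ef, ekc, moebius_apply_prime hp]
      push_cast
      ring
  rw [hS, hIH]
  have emu : (μ m : ℤ) = μ p * μ m' := by
    rw [hmm', isMultiplicative_moebius.map_mul_of_coprime copPm']
  have emk : m' * (p * k) = m * k := by rw [hmm']; ring
  rw [emk, emu, moebius_apply_prime hp]
  push_cast
  ring

theorem hecke_mollifier_identity (f a F : ℕ → ℝ)
    (hf1 : f 1 = 1)
    (hecke : ∀ m n : ℕ, 0 < m → 0 < n →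
      f m * f n = ∑ d ∈ (Nat.gcd m n).divisors, f (m * n / d ^ 2))
    (hinv : ∀ n : ℕ, 0 < n →
      (∑ d ∈ n.divisors, f d * a (n / d)) = if n = 1 then 1 else 0)
    (n : ℕ) (hn : 1 ≤ n) :
    ∑ p ∈ (Finset.Icc 1 n ×ˢ Finset.Icc 1 n ×ˢ Finset.Icc 1 n).filter
        (fun p => p.1 * (p.2.1 * p.2.2 ^ 2) = n),
      f p.1 * f p.2.1 * (ArithmeticFunction.moebius p.2.1 : ℝ) *
        ((ArithmeticFunction.moebius (p.2.1 * p.2.2) : ℝ)) ^ 2 * F (p.2.1 * p.2.2)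
    = f n * ∑ β ∈ n.divisors, (ArithmeticFunction.moebius β : ℝ) * F β := by
  classical
  have hn0 : n ≠ 0 := by omega
  set s := (Finset.Icc 1 n ×ˢ Finset.Icc 1 n ×ˢ Finset.Icc 1 n).filter
      (fun p : ℕ × ℕ × ℕ => p.1 * (p.2.1 * p.2.2 ^ 2) = n) with hsdef
  have hmaps : ∀ x ∈ s, x.2.1 * x.2.2 ∈ n.divisors := by
    intro x hx
    obtain ⟨-, hx2⟩ := Finset.mem_filter.mp hx
    exact Nat.mem_divisors.mpr ⟨⟨x.1 * x.2.2, by rw [← hx2]; ring⟩, hn0⟩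
  rw [Finset.mul_sum,
    ← Finset.sum_fiberwise_of_maps_to hmaps
      (fun x : ℕ × ℕ × ℕ => f x.1 * f x.2.1 * (μ x.2.1 : ℝ) *
        ((μ (x.2.1 * x.2.2) : ℝ)) ^ 2 * F (x.2.1 * x.2.2))]
  apply Finset.sum_congr rfl
  intro β hβ
  obtain ⟨hβn, -⟩ := Nat.mem_divisors.mp hβ
  have hβ0 : 0 < β := Nat.pos_of_mem_divisors hβ
  have hnβpos : 0 < n / β := Nat.div_pos (Nat.le_of_dvd (Nat.pos_of_ne_zero hn0) hβn) hβ0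
  have hTtrans :
      ∑ x ∈ s.filter (fun x => x.2.1 * x.2.2 = β),
        f x.1 * f x.2.1 * (μ x.2.1 : ℝ) * ((μ (x.2.1 * x.2.2) : ℝ)) ^ 2 * F (x.2.1 * x.2.2)
      = ∑ c ∈ (Nat.gcd β (n / β)).divisors,
          f (n / (β * c)) * f (β / c) * (μ (β / c) : ℝ) * ((μ β : ℝ)) ^ 2 * F β := by
    apply Finset.sum_nbij' (fun x : ℕ × ℕ × ℕ => x.2.2)
      (fun c => (n / (β * c), β / c, c))
    · -- maps to divisors of gcd
      intro x hx
      obtain ⟨hx1, hx2⟩ := Finset.mem_filter.mp hx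
      obtain ⟨-, hx3⟩ := Finset.mem_filter.mp hx1
      have hcβ : x.2.2 ∣ β := ⟨x.2.1, by rw [← hx2]; ring⟩
      have hβc : β * x.2.2 ∣ n := ⟨x.1, by rw [← hx3, ← hx2]; ring⟩
      have hcnβ : x.2.2 ∣ n / β := (Nat.dvd_div_iff_mul_dvd hβn).mpr hβc
      exact Nat.mem_divisors.mpr ⟨Nat.dvd_gcd hcβ hcnβ,
        Nat.gcd_ne_zero_left hβ0.ne'⟩
    · -- inverse maps into s with fiber condition
      intro c hc
      obtain ⟨hcg, -⟩ := Nat.mem_divisors.mp hc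
      have hcβ : c ∣ β := hcg.trans (Nat.gcd_dvd_left _ _)
      have hcnβ : c ∣ n / β := hcg.trans (Nat.gcd_dvd_right _ _)
      have hc0 : 0 < c := Nat.pos_of_mem_divisors hc
      have hβcn : β * c ∣ n := (Nat.dvd_div_iff_mul_dvd hβn).mp hcnβ
      have hβc0 : 0 < β * c := Nat.mul_pos hβ0 hc0
      have ha0 : 0 < n / (β * c) := Nat.div_pos (Nat.le_of_dvd (by omega) hβcn) hβc0
      have hb0 : 0 < β / c := Nat.div_pos (Nat.le_of_dvd hβ0 hcβ) hc0
      have han : n / (β * c) ≤ n := Nat.div_le_self _ _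
      have hbn : β / c ≤ n := le_trans (Nat.div_le_self _ _) (Nat.le_of_dvd (by omega) hβn)
      have hcn : c ≤ n := le_trans (Nat.le_of_dvd hβ0 hcβ)
        (Nat.le_of_dvd (by omega) hβn)
      refine Finset.mem_filter.mpr ⟨Finset.mem_filter.mpr ⟨?_, ?_⟩, ?_⟩
      · simp only [Finset.mem_product, Finset.mem_Icc]
        exact ⟨⟨ha0, han⟩, ⟨hb0, hbn⟩, ⟨hc0, hcn⟩⟩
      · show n / (β * c) * (β / c * c ^ 2) = n
        have h1 : β / c * c = β := Nat.div_mul_cancel hcβ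
        have : β / c * c ^ 2 = β * c := by rw [pow_two, ← mul_assoc, h1]
        rw [this, Nat.div_mul_cancel hβcn]
      · show β / c * c = β
        exact Nat.div_mul_cancel hcβ
    · -- left inverse
      intro x hx
      obtain ⟨hx1, hx2⟩ := Finset.mem_filter.mp hx
      obtain ⟨-, hx3⟩ := Finset.mem_filter.mp hx1
      have hc0 : 0 < x.2.2 := by
        obtain ⟨hmem, -⟩ := Finset.mem_filter.mp hx1
        simp only [Finset.mem_product, Finset.mem_Icc] at hmem
        omega
      have h1 : β * x.2.2 = x.2.1 * x.2.2 ^ 2 := by rw [← hx2]; ring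
      have h2 : n = x.1 * (β * x.2.2) := by rw [h1, ← hx3]
      have hβc0 : 0 < β * x.2.2 := Nat.mul_pos hβ0 hc0
      obtain ⟨x1, x2, x3⟩ := x
      simp only [Prod.mk.injEq]
      refine ⟨?_, ?_, trivial⟩
      · simp only at h2 hβc0 ⊢
        rw [h2, Nat.mul_div_cancel _ hβc0]
      · simp only at hx2 hc0 ⊢
        rw [← hx2, Nat.mul_div_cancel _ hc0]
    · intro c hc; rfl
    · -- values agree
      intro x hx
      obtain ⟨hx1, hx2⟩ := Finset.mem_filter.mp hx
      obtain ⟨-, hx3⟩ := Finset.mem_filter.mp hx1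
      have hc0 : 0 < x.2.2 := by
        obtain ⟨hmem, -⟩ := Finset.mem_filter.mp hx1
        simp only [Finset.mem_product, Finset.mem_Icc] at hmem
        omega
      have h1 : β * x.2.2 = x.2.1 * x.2.2 ^ 2 := by rw [← hx2]; ring
      have h2 : n = x.1 * (β * x.2.2) := by rw [h1, ← hx3]
      have hβc0 : 0 < β * x.2.2 := Nat.mul_pos hβ0 hc0
      have e1 : n / (β * x.2.2) = x.1 := by rw [h2, Nat.mul_div_cancel _ hβc0]
      have e2 : β / x.2.2 = x.2.1 := by rw [← hx2, Nat.mul_div_cancel _ hc0]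
      rw [hx2, e1, e2]
  rw [hTtrans]
  by_cases hβsq : Squarefree β
  · have h1 : ((μ β : ℤ) : ℝ) ^ 2 = 1 := by
      rw [← Int.cast_pow, moebius_sq_eq_one_of_squarefree hβsq, Int.cast_one]
    have hstep : ∀ c ∈ (Nat.gcd β (n / β)).divisors,
        f (n / (β * c)) * f (β / c) * (μ (β / c) : ℝ) * ((μ β : ℝ)) ^ 2 * F β
        = ((μ (β / c) : ℝ) * f (β / c) * f ((n / β) / c)) * F β := by
      intro c hc
      rw [Nat.div_div_eq_div_mul, h1]
      ring
    rw [Finset.sum_congr rfl hstep, ← Finset.sum_mul,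
      keyL f hf1 hecke β hβsq (n / β) hnβpos, Nat.mul_div_cancel' hβn]
    ring
  · have h0 : (μ β : ℤ) = 0 := moebius_eq_zero_of_not_squarefree hβsq
    simp [h0]
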